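/- Let M₀ be the symmetric 8×8 integer matrix with rows (−2,0,0,1,0,1,0,1), (0,−2,0,0,1,1,0,1), (0,0,−2,0,0,1,1,1), (1,0,0,−2,0,0,0,0), (0,1,0,0,−2,0,0,0), (1,1,1,0,0,−2,0,−2), (0,0,1,0,0,0,−2,0), (1,1,1,0,0,−2,0,−2). Then, regarded as a real matrix, −M₀ is positive semidefinite (equivalently, vᵀ M₀ v ≤ 0 for all v ∈ ℝ⁸) and M₀ has rank 6. -/

import Mathlib

open Matrix

/-- The intersection matrix of a distinguished basis of vanishing cycles of a
morsification of the parabolic singularity `P₈²`, as a real matrix. -/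
def P82IntersectionMatrixR : Matrix (Fin 8) (Fin 8) ℝ :=
  !![-2, 0, 0, 1, 0, 1, 0, 1;
     0, -2, 0, 0, 1, 1, 0, 1;
     0, 0, -2, 0, 0, 1, 1, 1;
     1, 0, 0, -2, 0, 0, 0, 0;
     0, 1, 0, 0, -2, 0, 0, 0;
     1, 1, 1, 0, 0, -2, 0, -2;
     0, 0, 1, 0, 0, 0, -2, 0;
     1, 1, 1, 0, 0, -2, 0, -2]

namespace P82Aux

variable {α : Type*} {m : ℕ}

@[simp] lemma cons_val_five (x : α) (u : Fin (m + 5) → α) :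
    vecCons x u 5 = vecHead (vecTail (vecTail (vecTail (vecTail u)))) := rfl
@[simp] lemma cons_val_six (x : α) (u : Fin (m + 6) → α) :
    vecCons x u 6 = vecHead (vecTail (vecTail (vecTail (vecTail (vecTail u))))) := rfl
@[simp] lemma cons_val_seven (x : α) (u : Fin (m + 7) → α) :
    vecCons x u 7 = vecHead (vecTail (vecTail (vecTail (vecTail (vecTail (vecTail u)))))) := rfl
@[simp] lemma head_const (c : α) : vecHead (fun _ : Fin (m + 1) => c) = c := rfl
@[simp] lemma tail_const (c : α) : vecTail (fun _ : Fin (m + 1) => c) = fun _ => c := rfl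

/-- Columns 0,1,2,3,4,6 of `M`. -/
def A : Matrix (Fin 8) (Fin 6) ℝ :=
  !![-2, 0, 0, 1, 0, 0;
     0, -2, 0, 0, 1, 0;
     0, 0, -2, 0, 0, 1;
     1, 0, 0, -2, 0, 0;
     0, 1, 0, 0, -2, 0;
     1, 1, 1, 0, 0, 0;
     0, 0, 1, 0, 0, -2;
     1, 1, 1, 0, 0, 0]

/-- Coefficients expressing all eight columns of `M` in terms of the six columns of `A`. -/
noncomputable def B : Matrix (Fin 6) (Fin 8) ℝ :=
  !![1, 0, 0, 0, 0, -2/3, 0, -2/3;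
     0, 1, 0, 0, 0, -2/3, 0, -2/3;
     0, 0, 1, 0, 0, -2/3, 0, -2/3;
     0, 0, 0, 1, 0, -1/3, 0, -1/3;
     0, 0, 0, 0, 1, -1/3, 0, -1/3;
     0, 0, 0, 0, 0, -1/3, 1, -1/3]

/-- Row selection: the first six rows. -/
def U : Matrix (Fin 6) (Fin 8) ℝ :=
  !![1, 0, 0, 0, 0, 0, 0, 0;
     0, 1, 0, 0, 0, 0, 0, 0;
     0, 0, 1, 0, 0, 0, 0, 0;
     0, 0, 0, 1, 0, 0, 0, 0;
     0, 0, 0, 0, 1, 0, 0, 0;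
     0, 0, 0, 0, 0, 1, 0, 0]

/-- Column selection: the first six columns. -/
def V : Matrix (Fin 8) (Fin 6) ℝ :=
  !![1, 0, 0, 0, 0, 0;
     0, 1, 0, 0, 0, 0;
     0, 0, 1, 0, 0, 0;
     0, 0, 0, 1, 0, 0;
     0, 0, 0, 0, 1, 0;
     0, 0, 0, 0, 0, 1;
     0, 0, 0, 0, 0, 0;
     0, 0, 0, 0, 0, 0]

/-- The first six columns of `M`. -/
def P : Matrix (Fin 8) (Fin 6) ℝ :=
  !![-2, 0, 0, 1, 0, 1;
     0, -2, 0, 0, 1, 1;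
     0, 0, -2, 0, 0, 1;
     1, 0, 0, -2, 0, 0;
     0, 1, 0, 0, -2, 0;
     1, 1, 1, 0, 0, -2;
     0, 0, 1, 0, 0, 0;
     1, 1, 1, 0, 0, -2]

/-- The upper-left `6 × 6` block of `M` (the `E₆` intersection matrix). -/
def E : Matrix (Fin 6) (Fin 6) ℝ :=
  !![-2, 0, 0, 1, 0, 1;
     0, -2, 0, 0, 1, 1;
     0, 0, -2, 0, 0, 1;
     1, 0, 0, -2, 0, 0;
     0, 1, 0, 0, -2, 0;
     1, 1, 1, 0, 0, -2]

/-- The inverse of `E`. -/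
noncomputable def N : Matrix (Fin 6) (Fin 6) ℝ :=
  !![-10/3, -8/3, -2, -5/3, -4/3, -4;
     -8/3, -10/3, -2, -4/3, -5/3, -4;
     -2, -2, -2, -1, -1, -3;
     -5/3, -4/3, -1, -4/3, -2/3, -2;
     -4/3, -5/3, -1, -2/3, -4/3, -2;
     -4, -4, -3, -2, -2, -6]

attribute [local simp] Matrix.mul_apply Fin.sum_univ_six Fin.sum_univ_eight

set_option maxHeartbeats 2000000 in
lemma hAB : A * B = P82IntersectionMatrixR := by
  ext i j
  fin_cases i <;> fin_cases j <;>
    norm_num [A, B, P82IntersectionMatrixR, Matrix.mul_apply, Fin.sum_univ_six, Matrix.cons_val_two, Matrix.cons_val_three, Matrix.cons_val_four, Matrix.tail_cons, Matrix.head_cons]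

set_option maxHeartbeats 2000000 in
lemma hMV : P82IntersectionMatrixR * V = P := by
  ext i j
  fin_cases i <;> fin_cases j <;>
    norm_num [V, P, P82IntersectionMatrixR, Matrix.mul_apply, Fin.sum_univ_eight, Matrix.cons_val_two, Matrix.cons_val_three, Matrix.cons_val_four, Matrix.tail_cons, Matrix.head_cons]

set_option maxHeartbeats 2000000 in
lemma hUP : U * P = E := by
  ext i j
  fin_cases i <;> fin_cases j <;>
    norm_num [U, P, E, Matrix.mul_apply, Fin.sum_univ_eight, Matrix.cons_val_two, Matrix.cons_val_three, Matrix.cons_val_four, Matrix.tail_cons, Matrix.head_cons]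

set_option maxHeartbeats 2000000 in
lemma hEN : E * N = 1 := by
  ext i j
  fin_cases i <;> fin_cases j <;>
    norm_num [E, N, Matrix.mul_apply, Fin.sum_univ_six, Matrix.one_apply, Fin.ext_iff, Matrix.cons_val_two, Matrix.cons_val_three, Matrix.cons_val_four, Matrix.tail_cons, Matrix.head_cons]

lemma hUnit : IsUnit E := (Matrix.isUnit_iff_isUnit_det E).2 (Matrix.isUnit_det_of_right_inverse hEN)

lemma herm : (-P82IntersectionMatrixR).IsHermitian := by
  ext i j
  fin_cases i <;> fin_cases j <;>
    simp [P82IntersectionMatrixR, Matrix.conjTranspose_apply]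

lemma quad (x : Fin 8 → ℝ) : 0 ≤ dotProduct (star x) ((-P82IntersectionMatrixR) *ᵥ x) := by
  simp only [P82IntersectionMatrixR, star_trivial, mulVec, dotProduct, Fin.sum_univ_eight,
    Matrix.neg_apply, Matrix.cons_val', Matrix.cons_val_zero, Matrix.cons_val_one, Matrix.head_cons,
    Matrix.cons_val_two, Matrix.cons_val_three, Matrix.cons_val_four,
    cons_val_five, cons_val_six, cons_val_seven,
    Matrix.tail_cons, head_const, tail_const,
    Matrix.empty_val', Matrix.cons_val_fin_one, Matrix.of_apply]
  nlinarith [sq_nonneg (2*(x 3) - x 0), sq_nonneg (2*(x 4) - x 1), sq_nonneg (2*(x 6) - x 2),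
    sq_nonneg (2*(x 5 + x 7) - (x 0 + x 1 + x 2)), sq_nonneg (x 0 - x 1), sq_nonneg (x 1 - x 2),
    sq_nonneg (x 0 - x 2)]

lemma rank_le : P82IntersectionMatrixR.rank ≤ 6 := by
  calc P82IntersectionMatrixR.rank = (A * B).rank := by rw [hAB]
    _ ≤ A.rank := Matrix.rank_mul_le_left A B
    _ ≤ 6 := by simpa using Matrix.rank_le_card_width A

lemma rank_ge : 6 ≤ P82IntersectionMatrixR.rank := by
  have h6 : E.rank = 6 := by simpa using Matrix.rank_of_isUnit E hUnit
  calc (6 : ℕ) = E.rank := h6.symm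
    _ = (U * (P82IntersectionMatrixR * V)).rank := by rw [hMV, hUP]
    _ ≤ (P82IntersectionMatrixR * V).rank := Matrix.rank_mul_le_right U _
    _ ≤ P82IntersectionMatrixR.rank := Matrix.rank_mul_le_left _ V

end P82Aux

/-- `−M₀` is positive semidefinite (equivalently `vᵀ M₀ v ≤ 0` for all
`v ∈ ℝ⁸`), and `M₀` has rank 6. -/
theorem stmt8 :
    (-P82IntersectionMatrixR).PosSemidef ∧
    (∀ v : Fin 8 → ℝ, v ⬝ᵥ P82IntersectionMatrixR.mulVec v ≤ 0) ∧
    P82IntersectionMatrixR.rank = 6 := by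
  refine ⟨Matrix.PosSemidef.of_dotProduct_mulVec_nonneg P82Aux.herm P82Aux.quad, fun v => ?_, le_antisymm P82Aux.rank_le P82Aux.rank_ge⟩
  have h := P82Aux.quad v
  simp only [star_trivial, Matrix.neg_mulVec, dotProduct_neg] at h
  linarith
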